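/- In G = Z/2 * Z/3, if [x]^s = [y] as conjugacy classes (i.e., x^s is conjugate to y) for a positive integer s, and y is not conjugate to a, b, b^{-1}, or the identity, then s · ||[x]|| = ||[y]||, where ||[g]|| denotes the minimal word length in the conjugacy class of g. -/

import Mathlib

noncomputable section

/-- The free product `G = ℤ/2 * ℤ/3`. -/
abbrev G : Type := Monoid.Coprod (Multiplicative (ZMod 2)) (Multiplicative (ZMod 3))

/-- The generator of the `ℤ/2` factor. -/
def a : G := Monoid.Coprod.inl (Multiplicative.ofAdd (1 : ZMod 2))

/-- The generator of the `ℤ/3` factor. -/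
def b : G := Monoid.Coprod.inr (Multiplicative.ofAdd (1 : ZMod 3))

/-- Word length of `g ∈ G` with respect to the generating set `{a, b, b⁻¹}`. -/
def wordLength (g : G) : ℕ :=
  sInf {n | ∃ l : List G, l.length = n ∧ (∀ x ∈ l, x = a ∨ x = b ∨ x = b⁻¹) ∧ l.prod = g}

/-- `g` is an `(ab)`-word: `g = a b^{ε_1} a b^{ε_2} ⋯ a b^{ε_t}` with each `ε_i = ±1`. -/
def IsAbWord (g : G) : Prop :=
  ∃ t : ℕ, 0 < t ∧ ∃ ε : Fin t → ℤ, (∀ i, ε i = 1 ∨ ε i = -1) ∧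
    g = (List.ofFn fun i : Fin t => a * b ^ ε i).prod

/-- Minimal word length in the conjugacy class of `g`. -/
def classLength (g : G) : ℕ := sInf {n | ∃ h : G, IsConj g h ∧ wordLength h = n}

/-- Minimal word length over representatives of a conjugacy class. -/
def conjClassLength (c : ConjClasses G) : ℕ :=
  sInf {n | ∃ g : G, ConjClasses.mk g = c ∧ wordLength g = n}

namespace AB

abbrev Letter : Type := ZMod 2 ⊕ ZMod 3

def ok (x y : Letter) : Prop := x.isLeft = !y.isLeft

def nz (x : Letter) : Prop := x ≠ Sum.inl 0 ∧ x ≠ Sum.inr 0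

def Valid (l : List Letter) : Prop := l.Chain' ok ∧ ∀ x ∈ l, nz x

theorem Valid.nil : Valid [] := ⟨List.isChain_nil, by simp⟩

theorem Valid.tail {x : Letter} {l : List Letter} (h : Valid (x :: l)) : Valid l :=
  ⟨h.1.tail, fun y hy => h.2 y (List.mem_cons_of_mem _ hy)⟩

/-- `t` does not start with an `inl` letter. -/
def NotInl (t : List Letter) : Prop := t = [] ∨ ∃ j t', t = Sum.inr j :: t'

/-- `t` does not start with an `inr` letter. -/
def NotInr (t : List Letter) : Prop := t = [] ∨ ∃ j t', t = Sum.inl j :: t'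

theorem notInl_of_chain {j : ZMod 2} {t : List Letter}
    (h : List.Chain' ok (Sum.inl j :: t)) : NotInl t := by
  match t with
  | [] => exact Or.inl rfl
  | Sum.inr m :: t' => exact Or.inr ⟨m, t', rfl⟩
  | Sum.inl m :: t' => have := (List.isChain_cons_cons.1 h).1; simp [ok] at this

theorem notInr_of_chain {j : ZMod 3} {t : List Letter}
    (h : List.Chain' ok (Sum.inr j :: t)) : NotInr t := by
  match t with
  | [] => exact Or.inl rfl
  | Sum.inl m :: t' => exact Or.inr ⟨m, t', rfl⟩
  | Sum.inr m :: t' => have := (List.isChain_cons_cons.1 h).1; simp [ok] at this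

def consA (k : ZMod 2) : List Letter → List Letter
  | [] => if k = 0 then [] else [Sum.inl k]
  | Sum.inl j :: t => if k = 0 then Sum.inl j :: t else t
  | Sum.inr j :: t => if k = 0 then Sum.inr j :: t else Sum.inl k :: Sum.inr j :: t

def consB (k : ZMod 3) : List Letter → List Letter
  | [] => if k = 0 then [] else [Sum.inr k]
  | Sum.inl j :: t => if k = 0 then Sum.inl j :: t else Sum.inr k :: Sum.inl j :: t
  | Sum.inr j :: t =>
      if k = 0 then Sum.inr j :: t else if j + k = 0 then t else Sum.inr (j + k) :: t

theorem consA_zero (l : List Letter) : consA 0 l = l := by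
  match l with
  | [] => simp [consA]
  | Sum.inl j :: t => simp [consA]
  | Sum.inr j :: t => simp [consA]

theorem consB_zero (l : List Letter) : consB 0 l = l := by
  match l with
  | [] => simp [consB]
  | Sum.inl j :: t => simp [consB]
  | Sum.inr j :: t => simp [consB]

theorem consA_notInl {k : ZMod 2} (hk : k ≠ 0) {t : List Letter} (ht : NotInl t) :
    consA k t = Sum.inl k :: t := by
  rcases ht with rfl | ⟨j, t', rfl⟩ <;> simp [consA, hk]

theorem consB_notInr {k : ZMod 3} (hk : k ≠ 0) {t : List Letter} (ht : NotInr t) :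
    consB k t = Sum.inr k :: t := by
  rcases ht with rfl | ⟨j, t', rfl⟩ <;> simp [consB, hk]

theorem two_ne_zero_eq_one : ∀ j : ZMod 2, j ≠ 0 → j = 1 := by decide

theorem valid_consA (k : ZMod 2) {l : List Letter} (h : Valid l) : Valid (consA k l) := by
  by_cases hk : k = 0
  · subst hk; rw [consA_zero]; exact h
  match l with
  | [] =>
      rw [consA_notInl hk (Or.inl rfl)]
      exact ⟨List.isChain_singleton _, fun x hx => by
        rcases List.mem_singleton.1 hx with rfl; exact ⟨by simp [hk], by simp⟩⟩
  | Sum.inl j :: t => simpa [consA, hk] using h.tail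
  | Sum.inr j :: t =>
      simp only [consA, if_neg hk]
      refine ⟨List.isChain_cons_cons.2 ⟨rfl, h.1⟩, ?_⟩
      intro x hx
      rcases List.mem_cons.1 hx with rfl | hx
      · exact ⟨by simp [hk], by simp⟩
      · exact h.2 x hx

theorem valid_consB (k : ZMod 3) {l : List Letter} (h : Valid l) : Valid (consB k l) := by
  by_cases hk : k = 0
  · subst hk; rw [consB_zero]; exact h
  match l with
  | [] =>
      rw [consB_notInr hk (Or.inl rfl)]
      exact ⟨List.isChain_singleton _, fun x hx => by
        rcases List.mem_singleton.1 hx with rfl; exact ⟨by simp, by simp [hk]⟩⟩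
  | Sum.inl j :: t =>
      simp only [consB, if_neg hk]
      refine ⟨List.isChain_cons_cons.2 ⟨rfl, h.1⟩, ?_⟩
      intro x hx
      rcases List.mem_cons.1 hx with rfl | hx
      · exact ⟨by simp, by simp [hk]⟩
      · exact h.2 x hx
  | Sum.inr j :: t =>
      by_cases hjk : j + k = 0
      · simp only [consB, if_neg hk, if_pos hjk]; exact h.tail
      simp only [consB, if_neg hk, if_neg hjk]
      refine ⟨List.isChain_cons.2 ⟨fun y hy => (List.isChain_cons.1 h.1).1 y hy, h.1.tail⟩, ?_⟩
      intro x hx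
      rcases List.mem_cons.1 hx with rfl | hx
      · exact ⟨by simp, by simp [hjk]⟩
      · exact h.2 x (List.mem_cons_of_mem _ hx)

theorem consA_consA (k k' : ZMod 2) {l : List Letter} (h : Valid l) :
    consA k (consA k' l) = consA (k + k') l := by
  by_cases hk : k = 0
  · subst hk; rw [consA_zero, zero_add]
  by_cases hk' : k' = 0
  · subst hk'; rw [consA_zero, add_zero]
  have hk1 := two_ne_zero_eq_one k hk
  have hk'1 := two_ne_zero_eq_one k' hk'
  subst hk1; subst hk'1
  have hkk' : (1 : ZMod 2) + 1 = 0 := by decide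
  rw [hkk', consA_zero]
  match l with
  | [] => simp [consA]
  | Sum.inr j :: t => simp [consA]
  | Sum.inl j :: t =>
      have hj : j = 1 :=
        two_ne_zero_eq_one j (fun h0 => (h.2 (Sum.inl j) (List.mem_cons_self)).1 (by rw [h0]))
      subst hj
      rw [show consA 1 (Sum.inl 1 :: t) = t by simp [consA]]
      rw [consA_notInl hk (notInl_of_chain h.1)]

theorem consB_consB (k k' : ZMod 3) {l : List Letter} (h : Valid l) :
    consB k (consB k' l) = consB (k + k') l := by
  by_cases hk : k = 0
  · subst hk; rw [consB_zero, zero_add]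
  by_cases hk' : k' = 0
  · subst hk'; rw [consB_zero, add_zero]
  match l with
  | [] =>
      rw [consB_notInr hk' (Or.inl rfl)]
      by_cases hkk' : k + k' = 0
      · have : k' + k = 0 := by rwa [add_comm]
        simp [consB, hk, this, hkk', consB_zero]
      · have h2 : k' + k ≠ 0 := by rwa [add_comm] at hkk'
        simp [consB, hk, h2, hkk', add_comm k' k]
  | Sum.inl j :: t =>
      rw [consB_notInr hk' (Or.inr ⟨j, t, rfl⟩)]
      by_cases hkk' : k + k' = 0
      · have : k' + k = 0 := by rwa [add_comm]
        simp [consB, hk, this, hkk', consB_zero]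
      · have h2 : k' + k ≠ 0 := by rwa [add_comm] at hkk'
        simp [consB, hk, h2, hkk', add_comm k' k]
  | Sum.inr j :: t =>
      have hj : j ≠ 0 := fun h0 =>
        (h.2 (Sum.inr j) (List.mem_cons_self)).2 (by rw [h0])
      have hnt : NotInr t := notInr_of_chain h.1
      by_cases hjk' : j + k' = 0
      · rw [show consB k' (Sum.inr j :: t) = t by simp [consB, hk', hjk']]
        rw [consB_notInr hk hnt]
        by_cases hkk' : k + k' = 0
        · have hkj : k = j := add_right_cancel (hkk'.trans hjk'.symm)
          rw [hkk', consB_zero, hkj]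
        · have hjkk' : j + (k + k') ≠ 0 := by
            rw [show j + (k + k') = (j + k') + k by ring, hjk', zero_add]; exact hk
          rw [show consB (k + k') (Sum.inr j :: t) =
              Sum.inr (j + (k + k')) :: t by simp [consB, hkk', hjkk']]
          rw [show j + (k + k') = (j + k') + k by ring, hjk', zero_add]
      · rw [show consB k' (Sum.inr j :: t) = Sum.inr (j + k') :: t by simp [consB, hk', hjk']]
        by_cases hkk' : k + k' = 0
        · rw [hkk', consB_zero]
          have he : j + k' + k = j := by
            rw [show j + k' + k = j + (k + k') by ring, hkk', add_zero]
          have : j + k' + k ≠ 0 := by rw [he]; exact hj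
          simp [consB, hk, this, he, hj]
        · have he : j + k' + k = j + (k + k') := by ring
          by_cases hz : j + (k + k') = 0
          · have : j + k' + k = 0 := by rw [he, hz]
            simp [consB, hk, hkk', this, hz]
          · have : j + k' + k ≠ 0 := by rw [he]; exact hz
            simp [consB, hk, hkk', this, hz, he]


open Multiplicative Monoid

def V : Type := {l : List Letter // Valid l}

def permA (k : ZMod 2) : Equiv.Perm V where
  toFun w := ⟨consA k w.1, valid_consA k w.2⟩
  invFun w := ⟨consA (-k) w.1, valid_consA (-k) w.2⟩
  left_inv w := Subtype.ext <| by
    simp only [consA_consA (-k) k w.2, neg_add_cancel, consA_zero]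
  right_inv w := Subtype.ext <| by
    simp only [consA_consA k (-k) w.2, add_neg_cancel, consA_zero]

def permB (k : ZMod 3) : Equiv.Perm V where
  toFun w := ⟨consB k w.1, valid_consB k w.2⟩
  invFun w := ⟨consB (-k) w.1, valid_consB (-k) w.2⟩
  left_inv w := Subtype.ext <| by
    simp only [consB_consB (-k) k w.2, neg_add_cancel, consB_zero]
  right_inv w := Subtype.ext <| by
    simp only [consB_consB k (-k) w.2, add_neg_cancel, consB_zero]

def φA : Multiplicative (ZMod 2) →* Equiv.Perm V where
  toFun k := permA k.toAdd
  map_one' := Equiv.ext fun w => Subtype.ext (consA_zero _)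
  map_mul' k k' := Equiv.ext fun w => Subtype.ext <| by
    have : (k * k').toAdd = k.toAdd + k'.toAdd := rfl
    simp only [this, permA, Equiv.coe_fn_mk, Equiv.Perm.coe_mul, Function.comp_apply]
    exact (consA_consA k.toAdd k'.toAdd w.2).symm

def φB : Multiplicative (ZMod 3) →* Equiv.Perm V where
  toFun k := permB k.toAdd
  map_one' := Equiv.ext fun w => Subtype.ext (consB_zero _)
  map_mul' k k' := Equiv.ext fun w => Subtype.ext <| by
    have : (k * k').toAdd = k.toAdd + k'.toAdd := rfl
    simp only [this, permB, Equiv.coe_fn_mk, Equiv.Perm.coe_mul, Function.comp_apply]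
    exact (consB_consB k.toAdd k'.toAdd w.2).symm

def φ : G →* Equiv.Perm V := Monoid.Coprod.lift φA φB

def emp : V := ⟨[], Valid.nil⟩

def nf (g : G) : V := φ g emp

def len (g : G) : ℕ := (nf g).1.length

def toG : Letter → G := Sum.elim (fun k => a ^ k.val) (fun k => b ^ k.val)

def ev (l : List Letter) : G := (l.map toG).prod

theorem ev_nil : ev [] = 1 := rfl

theorem ev_cons (x : Letter) (l : List Letter) : ev (x :: l) = toG x * ev l := by
  simp [ev]

theorem ev_append (l₁ l₂ : List Letter) : ev (l₁ ++ l₂) = ev l₁ * ev l₂ := by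
  simp [ev]

theorem a_pow (n : ℕ) : a ^ n = Coprod.inl (ofAdd (n : ZMod 2)) := by
  induction n with
  | zero => simp [a]
  | succ n ih =>
      rw [pow_succ, ih, a, ← map_mul]
      congr 1
      rw [← ofAdd_add]
      push_cast
      ring_nf

theorem b_pow (n : ℕ) : b ^ n = Coprod.inr (ofAdd (n : ZMod 3)) := by
  induction n with
  | zero => simp [b]
  | succ n ih =>
      rw [pow_succ, ih, b, ← map_mul]
      congr 1
      rw [← ofAdd_add]
      push_cast
      ring_nf

theorem apow (k : ZMod 2) : a ^ k.val = Coprod.inl (ofAdd k) := by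
  rw [a_pow, ZMod.natCast_val, ZMod.cast_id]

theorem bpow (k : ZMod 3) : b ^ k.val = Coprod.inr (ofAdd k) := by
  rw [b_pow, ZMod.natCast_val, ZMod.cast_id]

theorem toG_inl (k : ZMod 2) : toG (Sum.inl k) = Coprod.inl (ofAdd k) := by
  simp [toG, apow]

theorem toG_inr (k : ZMod 3) : toG (Sum.inr k) = Coprod.inr (ofAdd k) := by
  simp [toG, bpow]

theorem ev_consA (k : ZMod 2) {l : List Letter} (h : Valid l) :
    ev (consA k l) = Coprod.inl (ofAdd k) * ev l := by
  by_cases hk : k = 0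
  · subst hk; rw [consA_zero]; simp
  match l with
  | [] => rw [consA_notInl hk (Or.inl rfl), ev_cons, toG_inl]
  | Sum.inr j :: t => rw [consA_notInl hk (Or.inr ⟨j, t, rfl⟩), ev_cons, toG_inl]
  | Sum.inl j :: t =>
      have hj : j = 1 :=
        two_ne_zero_eq_one j (fun h0 => (h.2 (Sum.inl j) (List.mem_cons_self)).1 (by rw [h0]))
      have hk1 := two_ne_zero_eq_one k hk
      subst hj; subst hk1
      rw [show consA 1 (Sum.inl 1 :: t) = t by simp [consA]]
      rw [ev_cons, toG_inl, ← mul_assoc, ← map_mul]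
      have : (ofAdd (1 : ZMod 2)) * ofAdd 1 = 1 := by decide
      rw [this, map_one, one_mul]

theorem ev_consB (k : ZMod 3) {l : List Letter} (h : Valid l) :
    ev (consB k l) = Coprod.inr (ofAdd k) * ev l := by
  by_cases hk : k = 0
  · subst hk; rw [consB_zero]; simp
  match l with
  | [] => rw [consB_notInr hk (Or.inl rfl), ev_cons, toG_inr]
  | Sum.inl j :: t => rw [consB_notInr hk (Or.inr ⟨j, t, rfl⟩), ev_cons, toG_inr]
  | Sum.inr j :: t =>
      by_cases hjk : j + k = 0
      · rw [show consB k (Sum.inr j :: t) = t by simp [consB, hk, hjk]]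
        rw [ev_cons, toG_inr, ← mul_assoc, ← map_mul, ← ofAdd_add]
        rw [show k + j = 0 by rw [add_comm]; exact hjk]
        simp
      · rw [show consB k (Sum.inr j :: t) = Sum.inr (j + k) :: t by simp [consB, hk, hjk]]
        rw [ev_cons, ev_cons, toG_inr, toG_inr, ← mul_assoc, ← map_mul, ← ofAdd_add,
          add_comm j k]

theorem ev_phi (g : G) : ∀ w : V, ev ((φ g w).1) = g * ev w.1 := by
  induction g using Coprod.induction_on with
  | inl m =>
      intro w
      rw [show φ (Coprod.inl m) = φA m from Coprod.lift_apply_inl φA φB m]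
      exact (ev_consA m.toAdd w.2).trans (by rfl)
  | inr m =>
      intro w
      rw [show φ (Coprod.inr m) = φB m from Coprod.lift_apply_inr φA φB m]
      exact (ev_consB m.toAdd w.2).trans (by rfl)
  | mul x y hx hy =>
      intro w
      rw [map_mul]
      calc ev ((φ x * φ y) w).1 = ev ((φ x) ((φ y) w)).1 := rfl
        _ = x * ev ((φ y) w).1 := hx _
        _ = x * (y * ev w.1) := by rw [hy w]
        _ = x * y * ev w.1 := (mul_assoc _ _ _).symm

theorem ev_nf (g : G) : ev (nf g).1 = g := by
  have := ev_phi g emp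
  simpa [nf, emp, ev_nil] using this

theorem phi_ev (l : List Letter) (hl : Valid l) :
    ∀ u : V, Valid (l ++ u.1) → ((φ (ev l)) u).1 = l ++ u.1 := by
  induction l with
  | nil => intro u _; simp [ev_nil]
  | cons x t ih =>
      intro u hu
      have htu : Valid (t ++ u.1) := by
        have : (x :: t) ++ u.1 = x :: (t ++ u.1) := rfl
        rw [this] at hu
        exact hu.tail
      have hx : nz x := hu.2 x (by simp)
      rw [ev_cons, map_mul]
      have step : ((φ (ev t)) u).1 = t ++ u.1 := ih hl.tail u htu
      calc ((φ (toG x) * φ (ev t)) u).1 = ((φ (toG x)) ((φ (ev t)) u)).1 := rfl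
        _ = x :: (t ++ u.1) := by
            match x with
            | Sum.inl k =>
                rw [toG_inl, show φ (Coprod.inl (ofAdd k)) = φA (ofAdd k)
                  from Coprod.lift_apply_inl φA φB _]
                show consA k ((φ (ev t)) u).1 = _
                rw [step]
                have hk : k ≠ 0 := fun h0 => hx.1 (by rw [h0])
                have : List.Chain' ok (Sum.inl k :: (t ++ u.1)) := by
                  have : (Sum.inl k :: t) ++ u.1 = Sum.inl k :: (t ++ u.1) := rfl
                  rw [this] at hu
                  exact hu.1
                exact consA_notInl hk (notInl_of_chain this)
            | Sum.inr k =>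
                rw [toG_inr, show φ (Coprod.inr (ofAdd k)) = φB (ofAdd k)
                  from Coprod.lift_apply_inr φA φB _]
                show consB k ((φ (ev t)) u).1 = _
                rw [step]
                have hk : k ≠ 0 := fun h0 => hx.2 (by rw [h0])
                have : List.Chain' ok (Sum.inr k :: (t ++ u.1)) := by
                  have : (Sum.inr k :: t) ++ u.1 = Sum.inr k :: (t ++ u.1) := rfl
                  rw [this] at hu
                  exact hu.1
                exact consB_notInr hk (notInr_of_chain this)

theorem nf_ev {l : List Letter} (hl : Valid l) : (nf (ev l)).1 = l := by
  have := phi_ev l hl emp (by simpa [emp] using hl)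
  simpa [nf, emp] using this

theorem len_ev {l : List Letter} (hl : Valid l) : len (ev l) = l.length := by
  rw [len, nf_ev hl]

theorem a_sq : a * a = 1 := by
  rw [a, ← map_mul]
  have : (ofAdd (1 : ZMod 2)) * ofAdd 1 = 1 := by decide
  rw [this, map_one]

theorem a_inv : a⁻¹ = a := by
  rw [eq_comm, eq_inv_iff_mul_eq_one, a_sq]

theorem b_cube : b ^ 3 = 1 := by
  rw [b_pow]
  have : ((3 : ℕ) : ZMod 3) = 0 := by decide
  rw [this]
  simp

theorem b_sq : b ^ 2 = b⁻¹ := by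
  rw [eq_inv_iff_mul_eq_one, ← pow_succ, b_cube]

theorem three_ne_zero' : ∀ k : ZMod 3, k ≠ 0 → k = 1 ∨ k = 2 := by decide

def Gen (g : G) : Prop := g = a ∨ g = b ∨ g = b⁻¹

theorem toG_gen {x : Letter} (hx : nz x) : Gen (toG x) := by
  match x with
  | Sum.inl k =>
      have hk : k = 1 := two_ne_zero_eq_one k (fun h0 => hx.1 (by rw [h0]))
      subst hk
      left
      show a ^ (1 : ZMod 2).val = a
      norm_num [ZMod.val_one]
  | Sum.inr k =>
      have hk : k ≠ 0 := fun h0 => hx.2 (by rw [h0])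
      rcases three_ne_zero' k hk with rfl | rfl
      · right; left
        show b ^ (1 : ZMod 3).val = b
        norm_num [ZMod.val_one]
      · right; right
        show b ^ (2 : ZMod 3).val = b⁻¹
        rw [show (2 : ZMod 3).val = 2 from rfl, b_sq]

theorem length_consA (k : ZMod 2) (l : List Letter) :
    (consA k l).length ≤ l.length + 1 := by
  match l with
  | [] => by_cases hk : k = 0 <;> simp [consA, hk]
  | Sum.inl j :: t => by_cases hk : k = 0 <;> simp [consA, hk] <;> omega
  | Sum.inr j :: t => by_cases hk : k = 0 <;> simp [consA, hk]

theorem length_consB (k : ZMod 3) (l : List Letter) :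
    (consB k l).length ≤ l.length + 1 := by
  match l with
  | [] => by_cases hk : k = 0 <;> simp [consB, hk]
  | Sum.inl j :: t => by_cases hk : k = 0 <;> simp [consB, hk]
  | Sum.inr j :: t =>
      by_cases hk : k = 0
      · simp [consB, hk]
      by_cases hjk : j + k = 0 <;> simp [consB, hk, hjk] <;> omega

theorem phi_a (w : V) : ((φ a) w).1 = consA 1 w.1 := by
  rw [a, show φ (Coprod.inl (ofAdd (1 : ZMod 2))) = φA (ofAdd 1) from Coprod.lift_apply_inl φA φB _]
  rfl

theorem phi_b (w : V) : ((φ b) w).1 = consB 1 w.1 := by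
  rw [b, show φ (Coprod.inr (ofAdd (1 : ZMod 3))) = φB (ofAdd 1) from Coprod.lift_apply_inr φA φB _]
  rfl

theorem phi_b_inv (w : V) : ((φ b⁻¹) w).1 = consB (-1) w.1 := by
  rw [map_inv]
  have h1 : φ b = permB 1 := by
    rw [b, show φ (Coprod.inr (ofAdd (1 : ZMod 3))) = φB (ofAdd 1) from Coprod.lift_apply_inr φA φB _]
    rfl
  rw [h1]
  rfl

theorem phi_gen_len {g : G} (hg : Gen g) (w : V) :
    ((φ g) w).1.length ≤ w.1.length + 1 := by
  rcases hg with rfl | rfl | rfl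
  · rw [phi_a]; exact length_consA _ _
  · rw [phi_b]; exact length_consB _ _
  · rw [phi_b_inv]; exact length_consB _ _

theorem phi_prod_len : ∀ l : List G, (∀ x ∈ l, Gen x) → ∀ w : V,
    ((φ l.prod) w).1.length ≤ w.1.length + l.length := by
  intro l
  induction l with
  | nil => intro _ w; simp
  | cons x t ih =>
      intro hl w
      rw [List.prod_cons, map_mul]
      calc ((φ x * φ t.prod) w).1.length = ((φ x) ((φ t.prod) w)).1.length := rfl
        _ ≤ ((φ t.prod) w).1.length + 1 := phi_gen_len (hl x (by simp)) _
        _ ≤ w.1.length + t.length + 1 := by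
            have := ih (fun y hy => hl y (List.mem_cons_of_mem _ hy)) w
            omega
        _ = w.1.length + (x :: t).length := by simp; omega

theorem len_prod_le (l : List G) (hl : ∀ x ∈ l, Gen x) : len l.prod ≤ l.length := by
  have := phi_prod_len l hl emp
  simpa [len, nf, emp] using this

def WLSet (g : G) : Set ℕ :=
  {n | ∃ l : List G, l.length = n ∧ (∀ x ∈ l, x = a ∨ x = b ∨ x = b⁻¹) ∧ l.prod = g}

theorem len_mem_WLSet (g : G) : len g ∈ WLSet g := by
  refine ⟨(nf g).1.map toG, by simp [len], ?_, ?_⟩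
  · intro x hx
    rcases List.mem_map.1 hx with ⟨y, hy, rfl⟩
    exact toG_gen ((nf g).2.2 y hy)
  · exact ev_nf g

theorem wordLength_eq_len (g : G) : wordLength g = len g := by
  refine Nat.le_antisymm (Nat.sInf_le (len_mem_WLSet g)) ?_
  have hne : (WLSet g).Nonempty := ⟨len g, len_mem_WLSet g⟩
  obtain ⟨l, hlen, hgen, hprod⟩ := Nat.sInf_mem hne
  calc len g = len l.prod := by rw [hprod]
    _ ≤ l.length := len_prod_le l hgen
    _ = sInf (WLSet g) := hlen
    _ = wordLength g := rfl

theorem wordLength_mul_le (g h : G) :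
    wordLength (g * h) ≤ wordLength g + wordLength h := by
  obtain ⟨l₁, hl₁, hg₁, hp₁⟩ := Nat.sInf_mem ⟨len g, len_mem_WLSet g⟩
  obtain ⟨l₂, hl₂, hg₂, hp₂⟩ := Nat.sInf_mem ⟨len h, len_mem_WLSet h⟩
  have : (l₁ ++ l₂).length = wordLength g + wordLength h := by
    simp [hl₁, hl₂]; rfl
  exact Nat.sInf_le ⟨l₁ ++ l₂, this, by
    intro x hx; rcases List.mem_append.1 hx with hx | hx
    exacts [hg₁ x hx, hg₂ x hx], by rw [List.prod_append, hp₁, hp₂]⟩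

theorem wordLength_inv_le (g : G) : wordLength g⁻¹ ≤ wordLength g := by
  obtain ⟨l, hl, hgen, hp⟩ := Nat.sInf_mem ⟨len g, len_mem_WLSet g⟩
  refine le_trans (Nat.sInf_le ?_) hl.le
  refine ⟨(l.map fun x => x⁻¹).reverse, by simp, ?_, ?_⟩
  · intro x hx
    rw [List.mem_reverse] at hx
    rcases List.mem_map.1 hx with ⟨y, hy, rfl⟩
    rcases hgen y hy with rfl | rfl | rfl
    · exact Or.inl a_inv
    · exact Or.inr (Or.inr rfl)
    · exact Or.inr (Or.inl (inv_inv b))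
  · rw [← List.prod_inv_reverse, hp]

theorem wordLength_pow_le (g : G) (n : ℕ) : wordLength (g ^ n) ≤ n * wordLength g := by
  induction n with
  | zero =>
      simp only [pow_zero, Nat.zero_mul, Nat.le_zero]
      have : (1 : G) = List.prod [] := rfl
      have h0 : (0 : ℕ) ∈ WLSet 1 := ⟨[], rfl, by simp, rfl⟩
      exact Nat.le_zero.1 (Nat.sInf_le h0)
  | succ n ih =>
      calc wordLength (g ^ (n + 1)) = wordLength (g ^ n * g) := by rw [pow_succ]
        _ ≤ wordLength (g ^ n) + wordLength g := wordLength_mul_le _ _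
        _ ≤ n * wordLength g + wordLength g := by omega
        _ = (n + 1) * wordLength g := by ring

def wordOf : List (ZMod 3) → List Letter
  | [] => []
  | k :: t => Sum.inl 1 :: Sum.inr k :: wordOf t

theorem wordOf_notInr (l : List (ZMod 3)) : NotInr (wordOf l) := by
  match l with
  | [] => exact Or.inl rfl
  | k :: t => exact Or.inr ⟨1, _, rfl⟩

theorem wordOf_valid : ∀ {l : List (ZMod 3)}, (∀ k ∈ l, k ≠ 0) → Valid (wordOf l) := by
  intro l
  induction l with
  | nil => intro _; exact Valid.nil
  | cons k t ih =>
      intro h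
      have hv : Valid (wordOf t) := ih fun x hx => h x (List.mem_cons_of_mem _ hx)
      refine ⟨?_, ?_⟩
      · show List.Chain' ok (Sum.inl 1 :: Sum.inr k :: wordOf t)
        refine List.isChain_cons_cons.2 ⟨rfl, List.isChain_cons.2 ⟨?_, hv.1⟩⟩
        intro y hy
        rcases wordOf_notInr t with ht | ⟨j, t', ht⟩
        · rw [ht] at hy; simp at hy
        · rw [ht] at hy; simp at hy; subst hy; rfl
      · intro x hx
        rcases List.mem_cons.1 hx with rfl | hx
        · exact ⟨by simp, by simp⟩
        rcases List.mem_cons.1 hx with rfl | hx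
        · exact ⟨by simp, by simp [h k (by simp)]⟩
        · exact hv.2 x hx

theorem wordOf_length (l : List (ZMod 3)) : (wordOf l).length = 2 * l.length := by
  induction l with
  | nil => rfl
  | cons k t ih => show (wordOf t).length + 1 + 1 = _; simp [ih]; ring

def abEv (l : List (ZMod 3)) : G := (l.map fun k => a * b ^ k.val).prod

theorem toG_inl_one : toG (Sum.inl 1) = a := by
  show a ^ (1 : ZMod 2).val = a
  norm_num [ZMod.val_one]

theorem ev_wordOf (l : List (ZMod 3)) : ev (wordOf l) = abEv l := by
  induction l with
  | nil => rfl
  | cons k t ih =>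
      show ev (Sum.inl 1 :: Sum.inr k :: wordOf t) = abEv (k :: t)
      rw [ev_cons, ev_cons, ih, toG_inl_one]
      show a * (b ^ k.val * abEv t) = (a * b ^ k.val) * abEv t
      rw [mul_assoc]

theorem abEv_append (l m : List (ZMod 3)) : abEv (l ++ m) = abEv l * abEv m := by
  simp [abEv]

def rep : ℕ → List (ZMod 3) → List (ZMod 3)
  | 0, _ => []
  | n + 1, l => l ++ rep n l

theorem abEv_pow (l : List (ZMod 3)) (n : ℕ) : abEv l ^ n = abEv (rep n l) := by
  induction n with
  | zero => rfl
  | succ n ih =>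
      rw [pow_succ', ih, show rep (n+1) l = l ++ rep n l from rfl, abEv_append]

theorem rep_length (l : List (ZMod 3)) (n : ℕ) : (rep n l).length = n * l.length := by
  induction n with
  | zero => simp [rep]
  | succ n ih => show (l ++ rep n l).length = _; simp [ih]; ring

theorem rep_mem {l : List (ZMod 3)} {n : ℕ} {k : ZMod 3} (h : k ∈ rep n l) : k ∈ l := by
  induction n with
  | zero => simp [rep] at h
  | succ n ih =>
      rcases List.mem_append.1 h with h | h
      exacts [h, ih h]

theorem wordLength_abEv {l : List (ZMod 3)} (h : ∀ k ∈ l, k ≠ 0) :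
    wordLength (abEv l) = 2 * l.length := by
  rw [wordLength_eq_len, ← ev_wordOf, len_ev (wordOf_valid h), wordOf_length]

theorem classLength_congr {g h : G} (hc : IsConj g h) : classLength g = classLength h := by
  unfold classLength
  congr 1
  ext n
  exact ⟨fun ⟨k, hk, hn⟩ => ⟨k, hc.symm.trans hk, hn⟩,
    fun ⟨k, hk, hn⟩ => ⟨k, hc.trans hk, hn⟩⟩

theorem wordLength_le_conj {w h : G}
    (habs : ∀ n : ℕ, wordLength (w ^ n) = n * wordLength w)
    (hc : IsConj w h) : wordLength w ≤ wordLength h := by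
  obtain ⟨c, hch⟩ := isConj_iff.1 hc
  by_contra hlt
  push_neg at hlt
  have key : ∀ n : ℕ, n * wordLength w ≤ 2 * wordLength c + n * wordLength h := by
    intro n
    have h1 : w ^ n = c⁻¹ * (h ^ n * c) := by
      rw [← hch, conj_pow]
      group
    calc n * wordLength w = wordLength (w ^ n) := (habs n).symm
      _ = wordLength (c⁻¹ * (h ^ n * c)) := by rw [h1]
      _ ≤ wordLength c⁻¹ + (wordLength (h ^ n) + wordLength c) :=
          le_trans (wordLength_mul_le _ _) (by
            have := wordLength_mul_le (h ^ n) c; omega)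
      _ ≤ wordLength c + (n * wordLength h + wordLength c) := by
          have h2 := wordLength_inv_le c
          have h3 := wordLength_pow_le h n
          omega
      _ = 2 * wordLength c + n * wordLength h := by ring
  have hkey := key (2 * wordLength c + 1)
  nlinarith [hlt]

theorem classLength_abEv {l : List (ZMod 3)} (h : ∀ k ∈ l, k ≠ 0) :
    classLength (abEv l) = 2 * l.length := by
  have habs : ∀ n : ℕ, wordLength (abEv l ^ n) = n * wordLength (abEv l) := by
    intro n
    rw [abEv_pow, wordLength_abEv (fun k hk => h k (rep_mem hk)), wordLength_abEv h,
      rep_length]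
    ring
  have hmem : wordLength (abEv l) ∈ {n | ∃ h : G, IsConj (abEv l) h ∧ wordLength h = n} :=
    ⟨abEv l, IsConj.refl _, rfl⟩
  refine Nat.le_antisymm ?_ ?_
  · calc classLength (abEv l) ≤ wordLength (abEv l) := Nat.sInf_le hmem
      _ = 2 * l.length := wordLength_abEv h
  · obtain ⟨k, hk, hwk⟩ := Nat.sInf_mem (⟨_, hmem⟩ :
      Set.Nonempty {n | ∃ h : G, IsConj (abEv l) h ∧ wordLength h = n})
    calc 2 * l.length = wordLength (abEv l) := (wordLength_abEv h).symm
      _ ≤ wordLength k := wordLength_le_conj habs hk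
      _ = classLength (abEv l) := hwk

theorem toWordOf : ∀ (n : ℕ) (l : List Letter), l.length ≤ n → Valid l →
    (∃ j t, l = Sum.inl j :: t) → (∃ k, l.getLast? = some (Sum.inr k)) →
    ∃ m, m ≠ [] ∧ (∀ k ∈ m, k ≠ 0) ∧ l = wordOf m := by
  intro n
  induction n with
  | zero =>
      rintro l hl hv ⟨j, t, rfl⟩ _
      simp at hl
  | succ n ih =>
      rintro l hl hv ⟨j, t, rfl⟩ ⟨k₀, hlast⟩
      have hj : j = 1 := two_ne_zero_eq_one j fun h0 =>
        (hv.2 (Sum.inl j) (List.mem_cons_self)).1 (by rw [h0])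
      subst hj
      match t, hv, hlast, hl with
      | [], hv, hlast, hl => simp at hlast
      | Sum.inl m :: t', hv, _, _ =>
          have := (List.isChain_cons_cons.1 hv.1).1; simp [ok] at this
      | Sum.inr k :: t', hv, hlast, hl =>
          have hk : k ≠ 0 := fun h0 => (hv.2 (Sum.inr k) (by simp)).2 (by rw [h0])
          match t', hv, hlast, hl with
          | [], hv, hlast, hl =>
              exact ⟨[k], by simp, by simpa using hk, rfl⟩
          | Sum.inr m :: t'', hv, _, _ =>
              have := (List.isChain_cons_cons.1 hv.1.tail).1; simp [ok] at this
          | Sum.inl j' :: t'', hv, hlast, hl =>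
              obtain ⟨m', hm1, hm2, hm3⟩ := ih (Sum.inl j' :: t'')
                (by simp at hl ⊢; omega)
                hv.tail.tail
                ⟨j', t'', rfl⟩
                ⟨k₀, by simpa using hlast⟩
              refine ⟨k :: m', by simp, ?_, ?_⟩
              · rintro x hx
                rcases List.mem_cons.1 hx with rfl | hx
                exacts [hk, hm2 x hx]
              · rw [show wordOf (k :: m') = Sum.inl 1 :: Sum.inr k :: wordOf m' from rfl, ← hm3]

def Cl (g : G) : Prop :=
  IsConj 1 g ∨ IsConj a g ∨ IsConj b g ∨ IsConj b⁻¹ g ∨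
    ∃ m : List (ZMod 3), m ≠ [] ∧ (∀ k ∈ m, k ≠ 0) ∧ IsConj (abEv m) g

theorem Cl_trans {g g' : G} (h : IsConj g g') (hc : Cl g) : Cl g' := by
  rcases hc with h1 | h1 | h1 | h1 | ⟨m, hm1, hm2, hm3⟩
  · exact Or.inl (h1.trans h)
  · exact Or.inr (Or.inl (h1.trans h))
  · exact Or.inr (Or.inr (Or.inl (h1.trans h)))
  · exact Or.inr (Or.inr (Or.inr (Or.inl (h1.trans h))))
  · exact Or.inr (Or.inr (Or.inr (Or.inr ⟨m, hm1, hm2, hm3.trans h⟩)))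

theorem classify_aux : ∀ n : ℕ, ∀ g : G, len g ≤ n → Cl g := by
  intro n
  induction n with
  | zero =>
      intro g hg
      have h0 : (nf g).1 = [] := List.length_eq_zero_iff.1 (Nat.le_zero.1 hg)
      have hg1 : g = 1 := by rw [← ev_nf g, h0, ev_nil]
      exact Or.inl (by rw [hg1])
  | succ n ih =>
      intro g hg
      obtain ⟨L, hv, hgL, hlen⟩ : ∃ L : List Letter, Valid L ∧ g = ev L ∧ L.length ≤ n + 1 :=
        ⟨(nf g).1, (nf g).2, (ev_nf g).symm, hg⟩
      match L, hv, hgL, hlen with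
      | [], _, hgL, _ => exact Or.inl (by rw [hgL, ev_nil])
      | [x], hv, hgL, _ =>
          have hgx : g = toG x := by rw [hgL, ev_cons, ev_nil, mul_one]
          rcases toG_gen (hv.2 x (by simp)) with h1 | h1 | h1
          · exact Or.inr (Or.inl (by rw [hgx, h1]))
          · exact Or.inr (Or.inr (Or.inl (by rw [hgx, h1])))
          · exact Or.inr (Or.inr (Or.inr (Or.inl (by rw [hgx, h1]))))
      | x :: xx :: tt, hv0, hgL0, hlen0 =>
          obtain ⟨mid, y, hmy⟩ : ∃ mid y, (xx :: tt : List Letter) = mid ++ [y] := by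
            rcases (xx :: tt).eq_nil_or_concat' with h | ⟨L', z, h⟩
            · simp at h
            · exact ⟨L', z, h⟩
          rw [hmy] at hv0 hgL0 hlen0
          have hmid_chain : List.Chain' ok (mid ++ [y]) := hv0.1.tail
          have hxnz : nz x := hv0.2 x (by simp)
          have hynz : nz y := hv0.2 y (by simp)
          have hgfac : g = toG x * (ev mid * toG y) := by
            rw [hgL0, ev_cons, ev_append, ev_cons, ev_nil, mul_one]
          have hconj : IsConj (ev mid * (toG y * toG x)) g := by
            rw [isConj_iff]
            exact ⟨toG x, by rw [hgfac]; group⟩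
          have hvmid : Valid mid :=
            ⟨hmid_chain.left_of_append,
              fun z hz => hv0.2 z (by simp [hz])⟩
          have hlenmid : mid.length + 2 ≤ n + 1 := by simpa using hlen0
          match x, y, hxnz, hynz, hconj, hgfac, hv0, hmid_chain with
          | Sum.inl jx, Sum.inl jy, hxnz, hynz, hconj, hgfac, hv0, hmid_chain =>
              have hjx : jx = 1 := two_ne_zero_eq_one jx fun h0 => hxnz.1 (by rw [h0])
              have hjy : jy = 1 := two_ne_zero_eq_one jy fun h0 => hynz.1 (by rw [h0])
              subst hjx; subst hjy
              have h1 : toG (Sum.inl (1 : ZMod 2)) * toG (Sum.inl (1 : ZMod 2)) = 1 := by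
                rw [toG_inl_one]; exact a_sq
              have hconj' : IsConj (ev mid) g := by
                rw [h1, mul_one] at hconj; exact hconj
              exact Cl_trans hconj' (ih (ev mid) (by rw [len_ev hvmid]; omega))
          | Sum.inr kx, Sum.inr ky, hxnz, hynz, hconj, hgfac, hv0, hmid_chain =>
              have hyx : toG (Sum.inr ky) * toG (Sum.inr kx) = toG (Sum.inr (ky + kx)) := by
                rw [toG_inr, toG_inr, toG_inr, ← map_mul, ← ofAdd_add]
              rw [hyx] at hconj
              by_cases h0 : ky + kx = 0
              · rw [h0, show toG (Sum.inr (0 : ZMod 3)) = 1 by rw [toG_inr]; simp,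
                  mul_one] at hconj
                exact Cl_trans hconj (ih (ev mid) (by rw [len_ev hvmid]; omega))
              · have hev : ev mid * toG (Sum.inr (ky + kx)) = ev (mid ++ [Sum.inr (ky + kx)]) := by
                  rw [ev_append, ev_cons, ev_nil, mul_one]
                rw [hev] at hconj
                have hvnew : Valid (mid ++ [Sum.inr (ky + kx)]) := by
                  refine ⟨List.isChain_append.2 ⟨hvmid.1, List.isChain_singleton _, ?_⟩, ?_⟩
                  · intro p hp q hq
                    simp at hq
                    subst hq
                    exact (List.isChain_append.1 hmid_chain).2.2 p hp (Sum.inr ky) (by simp)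
                  · intro z hz
                    rcases List.mem_append.1 hz with hz | hz
                    · exact hvmid.2 z hz
                    · rcases List.mem_singleton.1 hz with rfl
                      exact ⟨by simp, by simp [h0]⟩
                refine Cl_trans hconj (ih _ ?_)
                rw [len_ev hvnew]
                simp only [List.length_append, List.length_singleton]
                omega
          | Sum.inl jx, Sum.inr ky, hxnz, hynz, hconj, hgfac, hv0, hmid_chain =>
              obtain ⟨m, hm1, hm2, hm3⟩ := toWordOf (Sum.inl jx :: (mid ++ [Sum.inr ky])).length
                _ le_rfl hv0 ⟨jx, _, rfl⟩
                ⟨ky, by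
                  rw [show Sum.inl (jx : ZMod 2) :: (mid ++ [Sum.inr ky]) =
                    (Sum.inl jx :: mid) ++ [Sum.inr ky] from rfl]
                  exact List.getLast?_concat⟩
              refine Or.inr (Or.inr (Or.inr (Or.inr ⟨m, hm1, hm2, ?_⟩)))
              rw [← ev_wordOf, ← hm3, ← hgL0]
          | Sum.inr kx, Sum.inl jy, hxnz, hynz, hconj, hgfac, hv0, hmid_chain =>
              have hev : ev mid * (toG (Sum.inl jy) * toG (Sum.inr kx)) =
                  ev ((mid ++ [Sum.inl jy]) ++ [Sum.inr kx]) := by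
                rw [ev_append, ev_append, ev_cons, ev_cons, ev_nil, mul_one, mul_one, mul_assoc]
              rw [hev] at hconj
              have hvnew : Valid ((mid ++ [Sum.inl jy]) ++ [Sum.inr kx]) := by
                refine ⟨List.isChain_append.2 ⟨hmid_chain, List.isChain_singleton _, ?_⟩, ?_⟩
                · intro p hp q hq
                  simp at hq
                  subst hq
                  rw [List.getLast?_concat] at hp
                  rcases Option.mem_some_iff.1 hp
                  rfl
                · intro z hz
                  rcases List.mem_append.1 hz with hz | hz
                  · exact hv0.2 z (List.mem_cons_of_mem _ hz)
                  · rcases List.mem_singleton.1 hz with rfl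
                    exact hxnz
              have hhead : ∃ j t, ((mid ++ [Sum.inl jy]) ++ [Sum.inr kx] : List Letter)
                  = Sum.inl j :: t := by
                match mid, hv0 with
                | [], _ => exact ⟨jy, _, rfl⟩
                | Sum.inl j₀ :: mid', _ => exact ⟨j₀, _, rfl⟩
                | Sum.inr j₀ :: mid', hv0 =>
                    have := (List.isChain_cons_cons.1 hv0.1).1; simp [ok] at this
              obtain ⟨m, hm1, hm2, hm3⟩ := toWordOf ((mid ++ [Sum.inl jy]) ++ [Sum.inr kx]).length
                _ le_rfl hvnew hhead ⟨kx, List.getLast?_concat⟩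
              refine Or.inr (Or.inr (Or.inr (Or.inr ⟨m, hm1, hm2, ?_⟩)))
              rw [← ev_wordOf, ← hm3]
              exact hconj

theorem classify (g : G) : Cl g := classify_aux (len g) g le_rfl

theorem isConj_pow {g h : G} (hc : IsConj g h) (n : ℕ) : IsConj (g ^ n) (h ^ n) := by
  obtain ⟨c, hch⟩ := isConj_iff.1 hc
  exact isConj_iff.2 ⟨c, by rw [← hch, conj_pow]⟩

theorem inr_two_eq_b_inv : Monoid.Coprod.inr (ofAdd (2 : ZMod 3)) = b⁻¹ := by
  rw [← b_sq, b_pow]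
  norm_num

end AB

open AB Multiplicative

/-- In `G = ℤ/2 * ℤ/3`, if `[x]^s = [y]` (i.e. `x^s` is conjugate
to `y`) for a positive integer `s`, and `y` is not conjugate to `a`, `b`,
`b⁻¹`, or the identity, then `s * ‖[x]‖ = ‖[y]‖`. -/
theorem class_length_of_power (x y : G) (s : ℕ) (hs : 0 < s)
    (hxy : IsConj (x ^ s) y) (hy1 : y ≠ 1)
    (ha : ¬IsConj y a) (hb : ¬IsConj y b) (hb' : ¬IsConj y b⁻¹) :
    s * classLength x = classLength y := by
  rcases classify x with h1 | h1 | h1 | h1 | ⟨m, hm1, hm2, h1⟩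
  · have hx1 : x = 1 := isConj_one_right.1 h1
    rw [hx1, one_pow] at hxy
    exact absurd (isConj_one_right.1 hxy) hy1
  · have h2 : IsConj (a ^ s) y := (isConj_pow h1 s).trans hxy
    rw [a_pow] at h2
    rcases (by decide : ∀ c : ZMod 2, c = 0 ∨ c = 1) ((s : ZMod 2)) with hc | hc
    · rw [hc] at h2
      simp only [ofAdd_zero, map_one] at h2
      exact absurd (isConj_one_right.1 h2) hy1
    · rw [hc] at h2
      exact absurd h2.symm ha
  · have h2 : IsConj (b ^ s) y := (isConj_pow h1 s).trans hxy
    rw [b_pow] at h2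
    rcases (by decide : ∀ c : ZMod 3, c = 0 ∨ c = 1 ∨ c = 2) ((s : ZMod 3)) with hc | hc | hc
    · rw [hc] at h2
      simp only [ofAdd_zero, map_one] at h2
      exact absurd (isConj_one_right.1 h2) hy1
    · rw [hc] at h2
      exact absurd h2.symm hb
    · rw [hc, inr_two_eq_b_inv] at h2
      exact absurd h2.symm hb'
  · have h2 : IsConj ((b ^ s)⁻¹) y := by
      rw [← inv_pow]
      exact (isConj_pow h1 s).trans hxy
    rw [b_pow] at h2
    rcases (by decide : ∀ c : ZMod 3, c = 0 ∨ c = 1 ∨ c = 2) ((s : ZMod 3)) with hc | hc | hc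
    · rw [hc] at h2
      simp only [ofAdd_zero, map_one, inv_one] at h2
      exact absurd (isConj_one_right.1 h2) hy1
    · rw [hc] at h2
      exact absurd h2.symm hb'
    · rw [hc, inr_two_eq_b_inv, inv_inv] at h2
      exact absurd h2.symm hb
  · have h2 : IsConj (abEv (rep s m)) y := by
      rw [← abEv_pow]
      exact (isConj_pow h1 s).trans hxy
    have e1 : classLength x = 2 * m.length := by
      rw [← classLength_congr h1]
      exact classLength_abEv hm2
    have e2 : classLength y = 2 * (rep s m).length := by
      rw [← classLength_congr h2]
      exact classLength_abEv fun k hk => hm2 k (rep_mem hk)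
    rw [e1, e2, rep_length]
    ring
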